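/- The diagonal sequence n ↦ P(n,n) (viewed as a sequence of real numbers) converges to 1/2 as n → ∞. -/

import Mathlib

/-- `P I S` is the probability that a fixed clean mobile gets infected in the
Bluetooth malware model with `I` infected and `S` clean mobiles. -/
def P : ℕ → ℕ → ℚ
  | 0, _ => 0
  | _ + 1, 0 => 0
  | I + 1, S + 1 =>
      1 / ((I : ℚ) + S + 1) + ((S : ℚ) / ((I : ℚ) + S + 1)) * P I S +
        ((I : ℚ) / ((I : ℚ) + S + 1)) * P (I - 1) (S + 1)
  termination_by I _ => I

lemma P_closed : ∀ I : ℕ, ∀ S : ℕ, I ≤ S → P I S = (I : ℚ) / ((I : ℚ) + S - 1) := by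
  intro I
  induction I using Nat.strong_induction_on with
  | _ I ih =>
    match I with
    | 0 => intro S _; simp [P]
    | 1 =>
      intro S hS
      match S, hS with
      | S + 1, _ =>
        show P 1 (S + 1) = _
        rw [show (1 : ℕ) = 0 + 1 from rfl, P]
        simp [P]
    | J + 2 =>
      intro S hS
      match S, hS with
      | S + 1, hS =>
        have hJS : J + 1 ≤ S := Nat.succ_le_succ_iff.mp hS
        have h1 : P (J + 1) S = ((J : ℚ) + 1) / ((J : ℚ) + S) := by
          rw [ih (J + 1) (by omega) S hJS]; push_cast; ring_nf
        have h2 : P J (S + 1) = (J : ℚ) / ((J : ℚ) + S) := by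
          rw [ih J (by omega) (S + 1) (by omega)]; push_cast; ring_nf
        show P (J + 2) (S + 1) = _
        rw [show J + 2 = (J + 1) + 1 from rfl, P]
        simp only [Nat.add_sub_cancel]
        rw [h1, h2]
        have hd1 : (J : ℚ) + S ≠ 0 := by
          have : (1 : ℚ) ≤ (J : ℚ) + S := by
            have : (1 : ℕ) ≤ J + S := by omega
            exact_mod_cast this
          linarith
        have hd2 : (2 : ℚ) + (J : ℚ) + (S : ℚ) ≠ 0 := by positivity
        push_cast
        have h4 : (J : ℚ) + 1 + 1 + ((S : ℚ) + 1) - 1 ≠ 0 := by intro h; apply hd2; linarith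
        rw [eq_div_iff h4]
        field_simp
        ring

/-- The diagonal infection probability tends to `1/2` as `n → ∞`. -/
theorem stmt_13 :
    Filter.Tendsto (fun n : ℕ => ((P n n : ℚ) : ℝ)) Filter.atTop (nhds (1 / 2)) := by
  have key : ∀ n : ℕ, 1 ≤ n → ((P n n : ℚ) : ℝ) = 1 / 2 + (1 / 2) * (1 / (2 * (n : ℝ) - 1)) := by
    intro n hn
    rw [P_closed n n le_rfl]
    have h1 : (1 : ℝ) ≤ (n : ℝ) := by exact_mod_cast hn
    have hd : (-1 : ℝ) + (n : ℝ) * 2 ≠ 0 := by nlinarith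
    have hd2 : (2 : ℝ) * (n : ℝ) - 1 ≠ 0 := by nlinarith
    push_cast
    have h5 : (n : ℝ) + (n : ℝ) - 1 ≠ 0 := by nlinarith
    rw [div_eq_iff h5]
    field_simp
    ring_nf
    field_simp
    ring
  have htop : Filter.Tendsto (fun n : ℕ => 2 * (n : ℝ) - 1) Filter.atTop Filter.atTop := by
    have := Filter.tendsto_atTop_add_const_right Filter.atTop (-1 : ℝ)
      ((tendsto_natCast_atTop_atTop (R := ℝ)).const_mul_atTop two_pos)
    simpa [sub_eq_add_neg] using this
  have h0 : Filter.Tendsto (fun n : ℕ => 1 / (2 * (n : ℝ) - 1)) Filter.atTop (nhds 0) := by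
    simpa [one_div, Function.comp_def] using tendsto_inv_atTop_zero.comp htop
  have h1 : Filter.Tendsto (fun n : ℕ => 1 / 2 + (1 / 2) * (1 / (2 * (n : ℝ) - 1)))
      Filter.atTop (nhds (1 / 2)) := by
    have := (h0.const_mul (1 / 2 : ℝ)).const_add (1 / 2 : ℝ)
    simpa using this
  apply h1.congr'
  filter_upwards [Filter.eventually_ge_atTop 1] with n hn
  exact (key n hn).symm
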